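/- The time-shifted sequencing inequality SEC₂ is valid: let R' be a set of requests with |R'| ≥ 2, i a time instant, and dur(R', i) the minimum time any truck needs to deliver all requests of R' when all pickups start at or after time i (not counting the initial trip to the first pickup location). Then in any valid truck route, the number of requests of R' whose pickup starts at or after i and whose delivery completes strictly before i + dur(R', i) is at most |R'| − 1. -/
import Mathlib

theorem stmt_10 {R : Type} [DecidableEq R]
    (Feasible : (R → ℕ) → (R → ℕ) → Prop)
    (R' : Finset R) (hR' : 2 ≤ R'.card)
    (i : ℕ) (dur : ℕ)
    (hdur : IsLeast {T : ℕ | ∃ p d, Feasible p d ∧ (∀ r ∈ R', i ≤ p r) ∧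
      ∀ r ∈ R', d r ≤ i + T} dur)
    (p d : R → ℕ) (hroute : Feasible p d) (hpd : ∀ r : R, p r ≤ d r) :
    (R'.filter (fun r => i ≤ p r ∧ d r < i + dur)).card ≤ R'.card - 1 := by
  rcases Nat.eq_zero_or_pos dur with h0 | hpos
  · have : R'.filter (fun r => i ≤ p r ∧ d r < i + dur) = ∅ := by
      apply Finset.filter_false_of_mem
      intro r _ ⟨h1, h2⟩
      have := hpd r
      omega
    rw [this, Finset.card_empty]
    omega
  · by_contra hc
    push_neg at hc
    have hsub : R'.filter (fun r => i ≤ p r ∧ d r < i + dur) ⊆ R' :=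
      Finset.filter_subset _ _
    have hcard : (R'.filter (fun r => i ≤ p r ∧ d r < i + dur)).card = R'.card := by
      have := Finset.card_le_card hsub
      omega
    have heq : R'.filter (fun r => i ≤ p r ∧ d r < i + dur) = R' :=
      Finset.eq_of_subset_of_card_le hsub (le_of_eq hcard.symm)
    have hmem : (dur - 1) ∈ {T : ℕ | ∃ p d, Feasible p d ∧ (∀ r ∈ R', i ≤ p r) ∧
        ∀ r ∈ R', d r ≤ i + T} := by
      refine ⟨p, d, hroute, ?_, ?_⟩ <;> intro r hr <;>
        · have := (Finset.mem_filter.mp (heq ▸ hr)).2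
          omega
    have := hdur.2 hmem
    omega
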